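/- Let R be a finite field equipped with the discrete topology, Γ a set with at least two elements, φ: Γ → Γ a map, and w ∈ R^Γ a weight vector. Then the dynamical system (R^Γ, σ_{φ,w}) is sensitive if and only if it is Li–Yorke chaotic. -/

import Mathlib

open Function Set

namespace WGShift

variable {Γ R : Type*}

/-- The basic entourage `O_M` determined by a set of coordinates `M ⊆ Γ`. -/
def shiftOM (M : Set Γ) : Set ((Γ → R) × (Γ → R)) :=
  {p | ∀ α ∈ M, p.1 α = p.2 α}

/-- Entourages of the product uniformity on `Γ → R` (with `R` discrete):
exactly the sets containing some `O_M` with `M` finite. -/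
def IsEntourage (O : Set ((Γ → R) × (Γ → R))) : Prop :=
  ∃ M : Set Γ, M.Finite ∧ shiftOM M ⊆ O

/-- The weighted generalized shift `σ_{φ,w}`. -/
def wshift [Mul R] (φ : Γ → Γ) (w : Γ → R) : (Γ → R) → (Γ → R) :=
  fun x α => w α * x (φ α)

/-- `α` is quasi-periodic under `φ` if `φ^i α = φ^j α` for some `i > j ≥ 1`. -/
def IsQuasiPeriodic (φ : Γ → Γ) (α : Γ) : Prop :=
  ∃ i j : ℕ, 1 ≤ j ∧ j < i ∧ φ^[i] α = φ^[j] α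

/-- Sensitivity of `(R^Γ, f)` with respect to the product uniformity. -/
def Sensitive [TopologicalSpace R] (f : (Γ → R) → (Γ → R)) : Prop :=
  ∃ O : Set ((Γ → R) × (Γ → R)), IsEntourage O ∧
    ∀ x : Γ → R, ∀ U : Set (Γ → R), IsOpen U → x ∈ U →
      ∃ y ∈ U, ∃ n : ℕ, (f^[n] x, f^[n] y) ∉ O

/-- Strong sensitivity of `(R^Γ, f)` with respect to the product uniformity. -/
def StronglySensitive [TopologicalSpace R] (f : (Γ → R) → (Γ → R)) : Prop :=
  ∃ O : Set ((Γ → R) × (Γ → R)), IsEntourage O ∧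
    ∀ x : Γ → R, ∀ U : Set (Γ → R), IsOpen U → x ∈ U →
      ∃ y ∈ U, ∃ N : ℕ, ∀ n ≥ N, (f^[n] x, f^[n] y) ∉ O

/-- `x, y` are proximal for `f`. -/
def ProximalPair (f : (Γ → R) → (Γ → R)) (x y : Γ → R) : Prop :=
  ∀ O : Set ((Γ → R) × (Γ → R)), IsEntourage O →
    ∃ n ≥ 1, (f^[n] x, f^[n] y) ∈ O

/-- `x, y` are asymptotic for `f`. -/
def AsymptoticPair (f : (Γ → R) → (Γ → R)) (x y : Γ → R) : Prop :=
  ∀ O : Set ((Γ → R) × (Γ → R)), IsEntourage O →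
    ∃ N ≥ 1, ∀ n ≥ N, (f^[n] x, f^[n] y) ∈ O

/-- A scrambled pair: proximal but not asymptotic. -/
def ScrambledPair (f : (Γ → R) → (Γ → R)) (x y : Γ → R) : Prop :=
  ProximalPair f x y ∧ ¬ AsymptoticPair f x y

/-- Li–Yorke chaos: existence of an uncountable scrambled set. -/
def LiYorkeChaotic (f : (Γ → R) → (Γ → R)) : Prop :=
  ∃ A : Set (Γ → R), ¬ A.Countable ∧
    ∀ x ∈ A, ∀ y ∈ A, x ≠ y → ScrambledPair f x y

/-- Topological transitivity of `(R^Γ, f)`. -/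
def TopTransitive [TopologicalSpace R] (f : (Γ → R) → (Γ → R)) : Prop :=
  ∀ U V : Set (Γ → R), IsOpen U → IsOpen V → U.Nonempty → V.Nonempty →
    ∃ n ≥ 1, (f^[n] '' U ∩ V).Nonempty

/-- The set of periodic points of `f`. -/
def perPoints (f : (Γ → R) → (Γ → R)) : Set (Γ → R) :=
  {x | ∃ n ≥ 1, f^[n] x = x}

/-- Devaney chaos: sensitive, topologically transitive, dense periodic points. -/
def DevaneyChaotic [TopologicalSpace R] (f : (Γ → R) → (Γ → R)) : Prop :=
  Sensitive f ∧ TopTransitive f ∧ Dense (perPoints f)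

open Classical in
/-- The point `x^A ∈ R^Γ` built from `A ⊆ ℕ` along the orbit of `ν`. -/
noncomputable def xA [Zero R] [One R] (φ : Γ → Γ) (ν : Γ) (A : Set ℕ) : Γ → R :=
  fun α => if ∃ p : ℕ, p ∈ A ∧ α = φ^[p * (p + 1) / 2] ν then 1 else 0

end WGShift

open WGShift

namespace Stmt12Aux

open Function Set WGShift

variable {Γ R : Type*}

/-! ### Triangular numbers -/

/-- triangular numbers -/
def t (p : ℕ) : ℕ := p * (p + 1) / 2

lemma two_t (p : ℕ) : 2 * t p = p * (p + 1) :=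
  Nat.mul_div_cancel' (Nat.even_mul_succ_self p).two_dvd

lemma t_succ (p : ℕ) : t (p + 1) = t p + (p + 1) := by
  have h1 := two_t p
  have h2 : 2 * t (p + 1) = 2 * t p + 2 * (p + 1) := by
    rw [two_t, two_t]; ring
  omega

lemma t_mono : StrictMono t :=
  strictMono_nat_of_lt_succ fun p => by rw [t_succ]; omega

lemma le_t (p : ℕ) : p ≤ t p := by
  induction p with
  | zero => simp [t]
  | succ p ih => rw [t_succ]; omega

/-! ### The weight product and the iterate formula -/

variable [Field R]

/-- the product of weights along the orbit -/
def Wp (φ : Γ → Γ) (w : Γ → R) (n : ℕ) (α : Γ) : R :=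
  ∏ i ∈ Finset.range n, w (φ^[i] α)

lemma wshift_iterate (φ : Γ → Γ) (w : Γ → R) :
    ∀ (n : ℕ) (x : Γ → R) (α : Γ),
      (wshift φ w)^[n] x α = Wp φ w n α * x (φ^[n] α) := by
  intro n
  induction n with
  | zero => intro x α; simp [Wp]
  | succ n ih =>
    intro x α
    rw [Function.iterate_succ_apply, ih]
    simp only [wshift, Wp, Finset.prod_range_succ, Function.iterate_succ_apply']
    ring

lemma Wp_ne_zero_iff (φ : Γ → Γ) (w : Γ → R) (n : ℕ) (α : Γ) :
    Wp φ w n α ≠ 0 ↔ ∀ i < n, w (φ^[i] α) ≠ 0 := by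
  rw [Wp, Finset.prod_ne_zero_iff]
  simp [Finset.mem_range]

/-! ### Orbit combinatorics -/

lemma offset_aux {φ : Γ → Γ} {ν : Γ} (hinj : Function.Injective fun n : ℕ => φ^[n] ν)
    {α : Γ} {n1 m1 n2 m2 : ℕ} (hle : n1 ≤ n2)
    (h1 : φ^[n1] α = φ^[m1] ν) (h2 : φ^[n2] α = φ^[m2] ν) : m1 + n2 = m2 + n1 := by
  have e1 : φ^[n2 - n1] (φ^[n1] α) = φ^[n2 - n1] (φ^[m1] ν) := by rw [h1]
  rw [← Function.iterate_add_apply, ← Function.iterate_add_apply] at e1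
  have hn : n2 - n1 + n1 = n2 := by omega
  rw [hn, h2] at e1
  have := hinj e1
  omega

lemma offset {φ : Γ → Γ} {ν : Γ} (hinj : Function.Injective fun n : ℕ => φ^[n] ν)
    {α : Γ} {n1 m1 n2 m2 : ℕ}
    (h1 : φ^[n1] α = φ^[m1] ν) (h2 : φ^[n2] α = φ^[m2] ν) : m1 + n2 = m2 + n1 := by
  rcases le_total n1 n2 with h | h
  · exact offset_aux hinj h h1 h2
  · have := offset_aux hinj h h2 h1
    omega

lemma per {φ : Γ → Γ} {α : Γ} {a b : ℕ} (hab : a < b) (h : φ^[a] α = φ^[b] α) :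
    ∀ k, a ≤ k → φ^[k + (b - a)] α = φ^[k] α := by
  intro k hk
  have h1 : k + (b - a) = (k - a) + b := by omega
  have h2 : k = (k - a) + a := by omega
  rw [h1, Function.iterate_add_apply, ← h, ← Function.iterate_add_apply, ← h2]

lemma descend {φ : Γ → Γ} {α : Γ} {a b : ℕ} (hab : a < b) (h : φ^[a] α = φ^[b] α) (n : ℕ) :
    ∀ m, n ≤ m → ∃ j, n ≤ j ∧ j < n + b ∧ φ^[m] α = φ^[j] α := by
  intro m
  induction m using Nat.strong_induction_on with
  | _ m ih =>
    intro hm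
    by_cases hmb : m < n + b
    · exact ⟨m, hm, hmb, rfl⟩
    · have heq : φ^[m] α = φ^[m - (b - a)] α := by
        have hrw : m = (m - (b - a)) + (b - a) := by omega
        conv_lhs => rw [hrw]
        exact per hab h _ (by omega)
      obtain ⟨j, hj1, hj2, hj3⟩ := ih (m - (b - a)) (by omega) (by omega)
      exact ⟨j, hj1, hj2, heq.trans hj3⟩

lemma orbit_subset {φ : Γ → Γ} {α : Γ} {a b : ℕ} (hab : a < b) (h : φ^[a] α = φ^[b] α) :
    ∀ m : ℕ, ∃ j < b, φ^[m] α = φ^[j] α := by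
  intro m
  obtain ⟨j, _, hj2, hj3⟩ := descend hab h 0 m (Nat.zero_le m)
  exact ⟨j, by omega, hj3⟩

/-! ### Values of `xA` -/

lemma xA_eq_one {φ : Γ → Γ} {ν : Γ} {A : Set ℕ} {p : ℕ} (hp : p ∈ A) :
    xA (R := R) φ ν A (φ^[t p] ν) = 1 := by
  simp only [xA]
  rw [if_pos ⟨p, hp, rfl⟩]

lemma xA_eq_zero {φ : Γ → Γ} {ν : Γ} (hinj : Function.Injective fun n : ℕ => φ^[n] ν)
    {A : Set ℕ} {p : ℕ} (hp : p ∉ A) :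
    xA (R := R) φ ν A (φ^[t p] ν) = 0 := by
  simp only [xA]
  rw [if_neg]
  rintro ⟨q, hq, hEq⟩
  have h1 : t p = t q := hinj hEq
  have h2 : p = q := t_mono.injective h1
  exact hp (h2 ▸ hq)

lemma xA_diff {φ : Γ → Γ} {ν : Γ} {A B : Set ℕ} {β : Γ}
    (h : xA (R := R) φ ν A β ≠ xA (R := R) φ ν B β) : ∃ p : ℕ, β = φ^[t p] ν := by
  by_cases hA : ∃ p : ℕ, p ∈ A ∧ β = φ^[p * (p + 1) / 2] ν
  · obtain ⟨p, _, hp⟩ := hA; exact ⟨p, hp⟩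
  · by_cases hB : ∃ p : ℕ, p ∈ B ∧ β = φ^[p * (p + 1) / 2] ν
    · obtain ⟨p, _, hp⟩ := hB; exact ⟨p, hp⟩
    · exfalso; apply h; simp only [xA]; rw [if_neg hA, if_neg hB]

/-! ### Proximality of pairs of `xA` points -/

lemma prox {φ : Γ → Γ} {w : Γ → R} {ν : Γ}
    (hinj : Function.Injective fun n : ℕ => φ^[n] ν) (A B : Set ℕ) :
    ProximalPair (wshift φ w) (xA φ ν A) (xA φ ν B) := by
  intro O hO
  obtain ⟨M, hMf, hMO⟩ := hO
  classical
  obtain ⟨nf, mf, hnm⟩ : ∃ nf mf : Γ → ℕ,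
      ∀ α : Γ, (∃ q r : ℕ, φ^[q] α = φ^[r] ν) → φ^[nf α] α = φ^[mf α] ν := by
    refine ⟨fun α => if h : ∃ q r : ℕ, φ^[q] α = φ^[r] ν then h.choose else 0,
            fun α => if h : ∃ q r : ℕ, φ^[q] α = φ^[r] ν then h.choose_spec.choose else 0, ?_⟩
    intro α h
    simp only [dif_pos h]
    exact h.choose_spec.choose_spec
  obtain ⟨D1, hD1⟩ : ∃ D1 : ℕ, ∀ α ∈ M, nf α ≤ D1 := by
    obtain ⟨D1, hD1⟩ := (hMf.image nf).bddAbove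
    exact ⟨D1, fun α hα => hD1 (Set.mem_image_of_mem nf hα)⟩
  obtain ⟨D2, hD2⟩ : ∃ D2 : ℕ, ∀ α ∈ M, mf α ≤ D2 := by
    obtain ⟨D2, hD2⟩ := (hMf.image mf).bddAbove
    exact ⟨D2, fun α hα => hD2 (Set.mem_image_of_mem mf hα)⟩
  set D := max D1 D2 with hD
  set p0 := 2 * D + 2 with hp0
  set n := t p0 + D + 1 with hn
  refine ⟨n, by omega, hMO ?_⟩
  simp only [shiftOM, Set.mem_setOf_eq]
  intro α hα
  rw [wshift_iterate, wshift_iterate]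
  congr 1
  by_contra hne
  obtain ⟨p, hp⟩ := xA_diff hne
  have hoff := offset hinj hp (hnm α ⟨n, t p, hp⟩)
  have h1 : nf α ≤ D := le_trans (hD1 α hα) (le_max_left _ _)
  have h2 : mf α ≤ D := le_trans (hD2 α hα) (le_max_right _ _)
  have hlt1 : t p0 < t p := by omega
  have hp0p : p0 < p := t_mono.lt_iff_lt.mp hlt1
  have hle : t (p0 + 1) ≤ t p := t_mono.monotone hp0p
  have hts := t_succ p0
  omega

/-! ### Non-asymptoticity -/

lemma nasym {φ : Γ → Γ} {w : Γ → R} {ν : Γ} (hw : ∀ i, w (φ^[i] ν) ≠ 0)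
    (hinj : Function.Injective fun n : ℕ => φ^[n] ν) {A B : Set ℕ}
    (hAB : {p : ℕ | p ∈ A ∧ p ∉ B}.Infinite) :
    ¬ AsymptoticPair (wshift φ w) (xA φ ν A) (xA φ ν B) := by
  intro h
  obtain ⟨N, hN1, hN⟩ := h (shiftOM {ν}) ⟨{ν}, Set.finite_singleton ν, subset_rfl⟩
  obtain ⟨p, hp, hpN⟩ := hAB.exists_gt N
  have hmem := hN (t p) (le_trans (le_of_lt hpN) (le_t p))
  have heq : (wshift φ w)^[t p] (xA φ ν A) ν = (wshift φ w)^[t p] (xA φ ν B) ν := hmem ν rfl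
  rw [wshift_iterate, wshift_iterate, xA_eq_one hp.1, xA_eq_zero hinj hp.2] at heq
  have hW : Wp φ w (t p) ν ≠ 0 := (Wp_ne_zero_iff φ w _ ν).mpr fun i _ => hw i
  rw [mul_one, mul_zero] at heq
  exact hW heq

/-! ### Prefix-code family -/

/-- an injective family `(ℕ → Bool) → Set ℕ` with pairwise infinite differences -/
def pcode (f : ℕ → Bool) : Set ℕ :=
  Set.range fun n => Encodable.encode ((List.range n).map f)

lemma pcode_diff {f g : ℕ → Bool} (hfg : f ≠ g) :
    {p : ℕ | p ∈ pcode f ∧ p ∉ pcode g}.Infinite := by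
  obtain ⟨i, hi⟩ := Function.ne_iff.mp hfg
  have hinjE : Function.Injective fun n : ℕ => Encodable.encode ((List.range n).map f) := by
    intro a b hab
    have h1 := Encodable.encode_injective hab
    have h2 := congrArg List.length h1
    simpa using h2
  have hsub : (fun n : ℕ => Encodable.encode ((List.range n).map f)) '' (Set.Ioi i) ⊆
      {p : ℕ | p ∈ pcode f ∧ p ∉ pcode g} := by
    rintro _ ⟨n, hn, rfl⟩
    have hin : i < n := hn
    refine ⟨⟨n, rfl⟩, ?_⟩
    rintro ⟨m, hm⟩
    have hlists := Encodable.encode_injective hm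
    have hlen : m = n := by
      have := congrArg List.length hlists
      simpa using this
    subst hlen
    have hget : ((List.range m).map g)[i]? = ((List.range m).map f)[i]? := by rw [hlists]
    simp only [List.getElem?_map, List.getElem?_range hin, Option.map_some] at hget
    exact hi (Option.some_injective _ hget).symm
  exact ((Set.Ioi_infinite i).image hinjE.injOn).mono hsub

lemma uncountable_range {γ : Type*} {F : (ℕ → Bool) → γ} (hF : Function.Injective F) :
    ¬ (Set.range F).Countable := by
  intro hc
  have hcount : Countable (ℕ → Bool) := by
    have h2 := hc.preimage hF
    rw [Set.preimage_range] at h2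
    exact Set.countable_univ_iff.mp h2
  classical
  obtain ⟨e, he⟩ := Countable.exists_injective_nat (ℕ → Bool)
  apply Function.cantor_injective (fun s : Set ℕ => e fun n => decide (n ∈ s))
  intro s u hsu
  have h3 := he hsu
  ext m
  have h4 := congrFun h3 m
  simpa [decide_eq_decide] using h4

/-! ### Good shifts are Li–Yorke chaotic -/

lemma good_ly {φ : Γ → Γ} {w : Γ → R}
    (hg : ∃ ν : Γ, (∀ i, w (φ^[i] ν) ≠ 0) ∧ Function.Injective fun n : ℕ => φ^[n] ν) :
    LiYorkeChaotic (wshift φ w) := by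
  obtain ⟨ν, hw, hinj⟩ := hg
  have hFinj : Function.Injective fun f : ℕ → Bool => xA (R := R) φ ν (pcode f) := by
    intro f g hfg2
    replace hfg2 : xA (R := R) φ ν (pcode f) = xA (R := R) φ ν (pcode g) := hfg2
    by_contra hne
    obtain ⟨p, hp⟩ := (pcode_diff hne).nonempty
    have h1 : xA (R := R) φ ν (pcode f) (φ^[t p] ν) = 1 := xA_eq_one hp.1
    have h0 : xA (R := R) φ ν (pcode g) (φ^[t p] ν) = 0 := xA_eq_zero hinj hp.2
    rw [hfg2] at h1
    rw [h1] at h0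
    exact one_ne_zero h0
  refine ⟨Set.range fun f : ℕ → Bool => xA (R := R) φ ν (pcode f),
    uncountable_range hFinj, ?_⟩
  rintro x ⟨f, rfl⟩ y ⟨g, rfl⟩ hxy
  have hfg : f ≠ g := by rintro rfl; exact hxy rfl
  exact ⟨prox hinj _ _, nasym hw hinj (pcode_diff hfg)⟩

/-! ### Good shifts are sensitive -/

lemma good_sens [TopologicalSpace R] [DiscreteTopology R] {φ : Γ → Γ} {w : Γ → R}
    (hg : ∃ ν : Γ, (∀ i, w (φ^[i] ν) ≠ 0) ∧ Function.Injective fun n : ℕ => φ^[n] ν) :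
    Sensitive (wshift φ w) := by
  classical
  obtain ⟨ν, hw, hinj⟩ := hg
  refine ⟨shiftOM {ν}, ⟨{ν}, Set.finite_singleton ν, subset_rfl⟩, ?_⟩
  intro x U hU hxU
  obtain ⟨I, u, hI, hsub⟩ := isOpen_pi_iff.mp hU x hxU
  have hfin : ((fun n : ℕ => φ^[n] ν) ⁻¹' (I : Set Γ)).Finite :=
    I.finite_toSet.preimage hinj.injOn
  obtain ⟨n, hn⟩ := hfin.infinite_compl.nonempty
  refine ⟨Function.update x (φ^[n] ν) (x (φ^[n] ν) + 1), hsub ?_, n, ?_⟩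
  · intro a ha
    have hane : a ≠ φ^[n] ν := by rintro rfl; exact hn ha
    rw [Function.update_of_ne hane]
    exact (hI a ha).2
  · intro hmem
    have heq : (wshift φ w)^[n] x ν =
        (wshift φ w)^[n] (Function.update x (φ^[n] ν) (x (φ^[n] ν) + 1)) ν := hmem ν rfl
    rw [wshift_iterate, wshift_iterate, Function.update_self] at heq
    have hW : Wp φ w n ν ≠ 0 := (Wp_ne_zero_iff φ w n ν).mpr fun i _ => hw i
    have h2 := mul_left_cancel₀ hW heq
    simp at h2

/-! ### Sensitivity yields a good point -/

lemma sens_good [TopologicalSpace R] [DiscreteTopology R] {φ : Γ → Γ} {w : Γ → R}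
    (hs : Sensitive (wshift φ w)) :
    ∃ ν : Γ, (∀ i, w (φ^[i] ν) ≠ 0) ∧ Function.Injective fun n : ℕ => φ^[n] ν := by
  by_contra hng
  push_neg at hng
  obtain ⟨O, ⟨M, hMf, hMO⟩, hP⟩ := hs
  have hS : ∀ α : Γ, {β : Γ | ∃ n : ℕ, Wp φ w n α ≠ 0 ∧ β = φ^[n] α}.Finite := by
    intro α
    by_cases hwα : ∀ i, w (φ^[i] α) ≠ 0
    · have hni := hng α hwα
      rw [Function.not_injective_iff] at hni
      obtain ⟨a, b, hab, hne⟩ := hni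
      obtain ⟨a, b, hlt, heq⟩ : ∃ a b : ℕ, a < b ∧ φ^[a] α = φ^[b] α := by
        rcases hne.lt_or_gt with h | h
        · exact ⟨a, b, h, hab⟩
        · exact ⟨b, a, h, hab.symm⟩
      apply Set.Finite.subset ((Set.finite_Iio b).image fun k => φ^[k] α)
      rintro β ⟨m, _, rfl⟩
      obtain ⟨j, hj, hje⟩ := orbit_subset hlt heq m
      exact ⟨j, hj, hje.symm⟩
    · push_neg at hwα
      obtain ⟨i, hi⟩ := hwα
      apply Set.Finite.subset ((Set.finite_Iic i).image fun k => φ^[k] α)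
      rintro β ⟨m, hW, rfl⟩
      refine ⟨m, Set.mem_Iic.mpr ?_, rfl⟩
      by_contra hmi
      push_neg at hmi
      exact hW (by
        rw [Wp]
        exact Finset.prod_eq_zero (Finset.mem_range.mpr hmi) hi)
  have hFsf : (⋃ α ∈ M, {β : Γ | ∃ n : ℕ, Wp φ w n α ≠ 0 ∧ β = φ^[n] α}).Finite :=
    hMf.biUnion fun α _ => hS α
  set Fs := ⋃ α ∈ M, {β : Γ | ∃ n : ℕ, Wp φ w n α ≠ 0 ∧ β = φ^[n] α} with hFsdef
  have hUopen : IsOpen {y : Γ → R | ∀ β ∈ Fs, y β = 0} := by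
    have hrw : {y : Γ → R | ∀ β ∈ Fs, y β = 0} =
        ⋂ β ∈ Fs, (fun y : Γ → R => y β) ⁻¹' {0} := by
      ext y; simp
    rw [hrw]
    exact hFsf.isOpen_biInter fun β _ =>
      (continuous_apply β).isOpen_preimage _ (isOpen_discrete _)
  obtain ⟨y, hyU, n, hn⟩ := hP 0 _ hUopen (fun β _ => rfl)
  apply hn
  apply hMO
  simp only [shiftOM, Set.mem_setOf_eq]
  intro α hα
  rw [wshift_iterate, wshift_iterate]
  by_cases hW : Wp φ w n α = 0
  · simp [hW]
  · have hy0 : y (φ^[n] α) = 0 := hyU _ (Set.mem_biUnion hα ⟨n, hW, rfl⟩)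
    simp [hy0]

/-! ### No scrambled pairs without a good point -/

lemma ng_pair {φ : Γ → Γ} {w : Γ → R}
    (hng : ∀ ν : Γ, (∀ i, w (φ^[i] ν) ≠ 0) → ¬ Function.Injective fun n : ℕ => φ^[n] ν)
    (x y : Γ → R) : ¬ ScrambledPair (wshift φ w) x y := by
  rintro ⟨hprox, hnasym⟩
  rw [AsymptoticPair] at hnasym
  push_neg at hnasym
  obtain ⟨O, hO, hbad⟩ := hnasym
  obtain ⟨M, hMf, hMO⟩ := hO
  have hcover : ∀ N : ℕ, ∃ n ≥ N,
      n ∈ ⋃ α ∈ M, {k : ℕ | Wp φ w k α ≠ 0 ∧ x (φ^[k] α) ≠ y (φ^[k] α)} := by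
    intro N
    obtain ⟨n, hnN, hnO⟩ := hbad (max N 1) (le_max_right _ _)
    refine ⟨n, le_trans (le_max_left _ _) hnN, ?_⟩
    have hnm : ¬ ((wshift φ w)^[n] x, (wshift φ w)^[n] y) ∈ shiftOM M :=
      fun hmem => hnO (hMO hmem)
    simp only [shiftOM, Set.mem_setOf_eq] at hnm
    push_neg at hnm
    obtain ⟨α, hα, hne⟩ := hnm
    rw [wshift_iterate, wshift_iterate] at hne
    refine Set.mem_biUnion hα ⟨?_, ?_⟩
    · intro h0; exact hne (by rw [h0, zero_mul, zero_mul])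
    · intro hxy; exact hne (by rw [hxy])
  obtain ⟨α, hαM, hinf⟩ : ∃ α ∈ M,
      {k : ℕ | Wp φ w k α ≠ 0 ∧ x (φ^[k] α) ≠ y (φ^[k] α)}.Infinite := by
    by_contra hfin
    push_neg at hfin
    have hUf : (⋃ α ∈ M,
        {k : ℕ | Wp φ w k α ≠ 0 ∧ x (φ^[k] α) ≠ y (φ^[k] α)}).Finite :=
      hMf.biUnion fun α hα => hfin α hα
    obtain ⟨D, hD⟩ := hUf.bddAbove
    obtain ⟨n, hn1, hn2⟩ := hcover (D + 1)
    have := hD hn2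
    omega
  have hwα : ∀ i, w (φ^[i] α) ≠ 0 := by
    intro i
    obtain ⟨n, hn, hni⟩ := hinf.exists_gt i
    exact ((Wp_ne_zero_iff φ w n α).mp hn.1) i hni
  have hni := hng α hwα
  rw [Function.not_injective_iff] at hni
  obtain ⟨a, b, hab, hne⟩ := hni
  obtain ⟨a, b, hlt, heq⟩ : ∃ a b : ℕ, a < b ∧ φ^[a] α = φ^[b] α := by
    rcases hne.lt_or_gt with h | h
    · exact ⟨a, b, h, hab⟩
    · exact ⟨b, a, h, hab.symm⟩
  obtain ⟨n, hn1, hmem⟩ := hprox (shiftOM ((fun j : ℕ => φ^[j] α) '' Set.Iio b))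
    ⟨_, (Set.finite_Iio b).image _, subset_rfl⟩
  have hagree : ∀ j < b, x (φ^[n + j] α) = y (φ^[n + j] α) := by
    intro j hj
    have hmj : (wshift φ w)^[n] x (φ^[j] α) = (wshift φ w)^[n] y (φ^[j] α) :=
      hmem (φ^[j] α) ⟨j, hj, rfl⟩
    rw [wshift_iterate, wshift_iterate] at hmj
    have hWj : Wp φ w n (φ^[j] α) ≠ 0 := by
      rw [Wp_ne_zero_iff]
      intro i _
      rw [← Function.iterate_add_apply]
      exact hwα (i + j)
    have hc := mul_left_cancel₀ hWj hmj
    rwa [← Function.iterate_add_apply] at hc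
  obtain ⟨m, hm, hmgt⟩ := hinf.exists_gt (n + b)
  obtain ⟨j, hj1, hj2, hj3⟩ := descend hlt heq n m (by omega)
  apply hm.2
  rw [hj3]
  have hjrw : j = n + (j - n) := by omega
  rw [hjrw]
  exact hagree (j - n) (by omega)

end Stmt12Aux

theorem stmt12 {R Γ : Type*} [Field R] [Fintype R]
    [TopologicalSpace R] [DiscreteTopology R] [Nontrivial Γ]
    (φ : Γ → Γ) (w : Γ → R) :
    Sensitive (wshift φ w) ↔ LiYorkeChaotic (wshift φ w) := by
  constructor
  · intro hs
    exact Stmt12Aux.good_ly (Stmt12Aux.sens_good hs)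
  · intro hly
    apply Stmt12Aux.good_sens
    by_contra hng
    push_neg at hng
    obtain ⟨A, hAc, hA⟩ := hly
    have hnt : A.Nontrivial := by
      by_contra h
      exact hAc ((Set.not_nontrivial_iff.mp h).countable)
    obtain ⟨x, hx, y, hy, hxy⟩ := hnt
    exact Stmt12Aux.ng_pair hng x y (hA x hx y hy hxy)
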